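/- Let a⁰ ∈ ℝ^p, let a be a real p×p matrix, let x ∈ ℝ^p, and let g : ℝ → ℝ^p be differentiable with g(0) = x and g'(t) = a⁰ + a g(t) for all t ∈ ℝ. Let à be the (1+p)×(1+p) real block matrix with first row (0, 0ᵀ) and remaining rows (a⁰, a), i.e. Ã(0,0)=0, Ã(0,j)=0 for j≥1, Ã(i,0)=a⁰_i and Ã(i,j)=a_{ij} for i,j≥1. Then for every t ∈ ℝ, the matrix exponential exp(tÃ) applied to the vector (1, x) ∈ ℝ^{1+p} equals (1, g(t)). -/

import Mathlib

open Matrix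

open NormedSpace in
/-- Let `g` solve the linear ODE `g' = a⁰ + a g`, `g(0) = x`, and let `Ã` be
the `(1+p)×(1+p)` block matrix with first row `(0, 0ᵀ)`, first column below it `a⁰` and lower
right block `a`. Then `exp(tÃ) (1, x) = (1, g(t))` for all `t`. -/
theorem statement3 {p : ℕ} (a0 : Fin p → ℝ) (a : Matrix (Fin p) (Fin p) ℝ)
    (x : Fin p → ℝ) (g : ℝ → Fin p → ℝ)
    (hg0 : g 0 = x)
    (hg : ∀ t : ℝ, HasDerivAt g (fun i => a0 i + ∑ j, a i j * g t j) t)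
    (Atil : Matrix (Fin (p + 1)) (Fin (p + 1)) ℝ)
    (hrow0 : ∀ j : Fin (p + 1), Atil 0 j = 0)
    (hcol0 : ∀ i : Fin p, Atil i.succ 0 = a0 i)
    (hblock : ∀ i j : Fin p, Atil i.succ j.succ = a i j) :
    ∀ t : ℝ,
      (NormedSpace.exp (t • Atil)).mulVec (Fin.cons 1 x) = Fin.cons 1 (g t) := by
  letI : SeminormedRing (Matrix (Fin (p+1)) (Fin (p+1)) ℝ) := Matrix.linftyOpSemiNormedRing
  letI : NormedRing (Matrix (Fin (p+1)) (Fin (p+1)) ℝ) := Matrix.linftyOpNormedRing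
  letI : NormedAlgebra ℝ (Matrix (Fin (p+1)) (Fin (p+1)) ℝ) := Matrix.linftyOpNormedAlgebra
  haveI : CompleteSpace (Matrix (Fin (p+1)) (Fin (p+1)) ℝ) := FiniteDimensional.complete ℝ _
  set v : ℝ → Fin (p+1) → ℝ := fun s => Fin.cons 1 (g s) with hv_def
  -- v solves v' = Atil *ᵥ v
  have hv : ∀ s : ℝ, HasDerivAt v (Atil.mulVec (v s)) s := by
    intro s
    rw [hasDerivAt_pi]
    intro i
    refine Fin.cases ?_ ?_ i
    · have : (Atil.mulVec (v s)) 0 = 0 := by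
        simp [Matrix.mulVec, dotProduct, hrow0]
      rw [this]
      exact (hasDerivAt_const s (1:ℝ)).congr_deriv rfl |>.congr_of_eventuallyEq
        (Filter.Eventually.of_forall fun u => by simp [hv_def])
    · intro i
      have h1 : HasDerivAt (fun u => g u i) (a0 i + ∑ j, a i j * g s j) s :=
        hasDerivAt_pi.1 (hg s) i
      have h2 : (Atil.mulVec (v s)) i.succ = a0 i + ∑ j, a i j * g s j := by
        simp only [Matrix.mulVec, dotProduct, Fin.sum_univ_succ, hv_def, Fin.cons_zero,
          Fin.cons_succ, hcol0, hblock, mul_one]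
      rw [h2]
      exact h1.congr_of_eventuallyEq (Filter.Eventually.of_forall fun u => by simp [hv_def])
  -- entrywise derivative of the exponential
  have hE : ∀ (s : ℝ) (i j : Fin (p+1)),
      HasDerivAt (fun u : ℝ => exp (u • (-Atil)) i j)
        ((exp (s • (-Atil)) * (-Atil)) i j) s := by
    intro s i j
    have h := hasDerivAt_exp_smul_const (𝕂 := ℝ) (-Atil) s
    let L : Matrix (Fin (p+1)) (Fin (p+1)) ℝ →ₗ[ℝ] ℝ :=
      (LinearMap.proj j).comp (LinearMap.proj (R := ℝ)
        (φ := fun _ : Fin (p+1) => Fin (p+1) → ℝ) i)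
    have hL := (LinearMap.toContinuousLinearMap L).hasFDerivAt.comp_hasDerivAt s h
    exact hL
  -- F is constant
  set F : ℝ → Fin (p+1) → ℝ := fun s => (exp (s • (-Atil))).mulVec (v s) with hF_def
  have hF : ∀ s : ℝ, HasDerivAt F 0 s := by
    intro s
    rw [hasDerivAt_pi]
    intro i
    have hvj : ∀ j, HasDerivAt (fun u => v u j) ((Atil.mulVec (v s)) j) s :=
      fun j => hasDerivAt_pi.1 (hv s) j
    have hsum : HasDerivAt (fun u => ∑ j, exp (u • (-Atil)) i j * v u j)
        (∑ j, ((exp (s • (-Atil)) * (-Atil)) i j * v s j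
          + exp (s • (-Atil)) i j * (Atil.mulVec (v s)) j)) s :=
      HasDerivAt.fun_sum fun j _ => (hE s i j).mul (hvj j)
    have key : (∑ j, ((exp (s • (-Atil)) * (-Atil)) i j * v s j
          + exp (s • (-Atil)) i j * (Atil.mulVec (v s)) j)) = 0 := by
      rw [Finset.sum_add_distrib]
      have e1 : (∑ j, (exp (s • (-Atil)) * (-Atil)) i j * v s j)
          = ((exp (s • (-Atil)) * (-Atil)).mulVec (v s)) i := rfl
      have e2 : (∑ j, exp (s • (-Atil)) i j * (Atil.mulVec (v s)) j)
          = ((exp (s • (-Atil))).mulVec (Atil.mulVec (v s))) i := rfl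
      rw [e1, e2, ← Matrix.mulVec_mulVec, Matrix.neg_mulVec, Matrix.mulVec_neg]
      simp
    have : HasDerivAt (fun u => F u i)
        (∑ j, ((exp (s • (-Atil)) * (-Atil)) i j * v s j
          + exp (s • (-Atil)) i j * (Atil.mulVec (v s)) j)) s := by
      refine hsum.congr_of_eventuallyEq (Filter.Eventually.of_forall fun u => ?_)
      rfl
    rw [key] at this
    simpa using this
  have hconst : ∀ s : ℝ, F s = F 0 := by
    intro s
    have hdiff : Differentiable ℝ F := fun u => (hF u).differentiableAt
    have hderiv : ∀ u, deriv F u = 0 := fun u => (hF u).deriv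
    exact is_const_of_deriv_eq_zero hdiff hderiv s 0
  have hF0 : F 0 = Fin.cons 1 x := by
    simp [hF_def, hv_def, hg0, NormedSpace.exp_zero]
  intro t
  have h1 : F t = Fin.cons 1 x := (hconst t).trans hF0
  have h2 : exp (t • Atil) * exp (t • (-Atil)) = 1 := by
    rw [smul_neg, ← Matrix.exp_add_of_commute _ _ (Commute.neg_right (Commute.refl (t • Atil)))]
    simp [NormedSpace.exp_zero]
  calc (exp (t • Atil)).mulVec (Fin.cons 1 x)
      = (exp (t • Atil)).mulVec (F t) := by rw [h1]
    _ = ((exp (t • Atil)) * (exp (t • (-Atil)))).mulVec (v t) := by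
        rw [← Matrix.mulVec_mulVec]
    _ = Fin.cons 1 (g t) := by rw [h2, Matrix.one_mulVec]
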